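/- Let 𝔽 be a field with algebraic closure 𝔽̄, let S(λ) = [[A(λ), B(λ)], [−C(λ), D(λ)]] ∈ 𝔽[λ]^{(n+p)×(n+m)} be a polynomial system matrix with unimodular state matrix A(λ) and polynomial transfer function matrix P(λ) ∈ 𝔽[λ]^{p×m}, and let λ₀ ∈ 𝔽̄. Then the linear map E_ℓ : 𝒩_ℓ(P(λ₀)) → 𝒩_ℓ(S(λ₀)) defined by E_ℓ(yᵀ) = yᵀ[C(λ₀)A(λ₀)⁻¹ I_p] (the row vector obtained by concatenating yᵀC(λ₀)A(λ₀)⁻¹ and yᵀ) is a bijection between the left nullspaces over 𝔽̄ of P(λ₀) and of S(λ₀). -/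
import Mathlib


open Polynomial Matrix

lemma map_mul_aeval {F : Type*} [Field F] {k l r : ℕ}
    (M : Matrix (Fin k) (Fin l) (Polynomial F)) (N : Matrix (Fin l) (Fin r) (Polynomial F))
    (lam : AlgebraicClosure F) :
    (M * N).map (fun q => Polynomial.aeval lam q) =
      M.map (fun q => Polynomial.aeval lam q) * N.map (fun q => Polynomial.aeval lam q) :=
  Matrix.map_mul (f := (Polynomial.aeval lam).toRingHom)

lemma map_inv_comm {F : Type*} [Field F] {n : ℕ}
    (A : Matrix (Fin n) (Fin n) (Polynomial F)) (hA : IsUnit A.det)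
    (lam : AlgebraicClosure F) :
    (A.map (fun q => Polynomial.aeval lam q))⁻¹ = A⁻¹.map (fun q => Polynomial.aeval lam q) := by
  apply Matrix.inv_eq_right_inv
  rw [← map_mul_aeval, Matrix.mul_nonsing_inv A hA]
  exact Matrix.map_one _ (map_zero _) (map_one _)

/-- Let `S = [[A, B], [-C, D]]` be a polynomial system matrix with unimodular
state matrix `A` and polynomial transfer function matrix `P = D + C A⁻¹ B`, and let `λ₀` be in
the algebraic closure of `F`. Then `yᵀ ↦ yᵀ [C(λ₀) A(λ₀)⁻¹  I_p]` is a bijection between the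
left nullspaces of `P(λ₀)` and `S(λ₀)`. -/
theorem stmt_4 {F : Type*} [Field F] {n p m : ℕ}
    (A : Matrix (Fin n) (Fin n) (Polynomial F))
    (B : Matrix (Fin n) (Fin m) (Polynomial F))
    (C : Matrix (Fin p) (Fin n) (Polynomial F))
    (D : Matrix (Fin p) (Fin m) (Polynomial F))
    (hA : IsUnit A.det)
    (S : Matrix (Fin n ⊕ Fin p) (Fin n ⊕ Fin m) (Polynomial F))
    (hS : S = Matrix.fromBlocks A B (-C) D)
    (P : Matrix (Fin p) (Fin m) (Polynomial F))
    (hP : P = D + C * A⁻¹ * B)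
    (lam : AlgebraicClosure F) :
    Set.BijOn
      (fun y : Fin p → AlgebraicClosure F =>
        Sum.elim
          (Matrix.vecMul y ((C.map (fun q => Polynomial.aeval lam q)) *
            (A.map (fun q => Polynomial.aeval lam q))⁻¹)) y)
      {y | Matrix.vecMul y (P.map (fun q => Polynomial.aeval lam q)) = 0}
      {w | Matrix.vecMul w (S.map (fun q => Polynomial.aeval lam q)) = 0} := by
  set f : Polynomial F → AlgebraicClosure F := fun q => Polynomial.aeval lam q with hf
  set AL := A.map f with hAL
  set BL := B.map f with hBL
  set CL := C.map f with hCL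
  set DL := D.map f with hDL
  have hdet : IsUnit AL.det := by
    have : AL.det = Polynomial.aeval lam A.det := by
      simpa [AL, hf] using (RingHom.map_det ((Polynomial.aeval lam).toRingHom) A).symm
    rw [this]
    exact hA.map (Polynomial.aeval lam)
  have hinv : AL⁻¹ * AL = 1 := Matrix.nonsing_inv_mul AL hdet
  have hAinv : AL⁻¹ = A⁻¹.map f := map_inv_comm A hA lam
  have hPL : P.map f = DL + CL * AL⁻¹ * BL := by
    rw [hP, hAinv, Matrix.map_add f (fun a b => map_add (Polynomial.aeval lam) a b),
      map_mul_aeval, map_mul_aeval]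
  have hSL : S.map f = Matrix.fromBlocks AL BL (-CL) DL := by
    rw [hS, Matrix.fromBlocks_map]
    ext i j
    cases i <;> cases j <;> simp [AL, BL, CL, DL, hf, Matrix.map_apply]
  constructor
  · -- MapsTo
    intro y hy
    simp only [Set.mem_setOf_eq] at hy ⊢
    rw [hSL, Matrix.vecMul_fromBlocks]
    have h1 : (Matrix.vecMul y (CL * AL⁻¹)) ᵥ* AL + y ᵥ* (-CL) = 0 := by
      rw [Matrix.vecMul_vecMul, Matrix.mul_assoc, hinv, Matrix.mul_one, Matrix.vecMul_neg,
        add_neg_cancel]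
    have h2 : (Matrix.vecMul y (CL * AL⁻¹)) ᵥ* BL + y ᵥ* DL = 0 := by
      rw [Matrix.vecMul_vecMul]
      rw [hPL, Matrix.vecMul_add, add_comm] at hy
      exact hy
    ext i
    cases i with
    | inl i => exact congrFun h1 i
    | inr i => exact congrFun h2 i
  constructor
  · -- InjOn
    intro y₁ _ y₂ _ h
    have := congrArg (fun w => w ∘ Sum.inr) h
    simpa [funext_iff] using this
  · -- SurjOn
    intro w hw
    simp only [Set.mem_setOf_eq] at hw
    set x := w ∘ Sum.inl with hx'
    set y := w ∘ Sum.inr with hy'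
    have hwelim : w = Sum.elim x y := by
      ext i; cases i <;> rfl
    rw [hSL, Matrix.vecMul_fromBlocks] at hw
    have h1 : x ᵥ* AL + y ᵥ* (-CL) = 0 := by
      ext i; exact congrFun hw (Sum.inl i)
    have h2 : x ᵥ* BL + y ᵥ* DL = 0 := by
      ext i; exact congrFun hw (Sum.inr i)
    have hx : x = Matrix.vecMul y (CL * AL⁻¹) := by
      have h1' : x ᵥ* AL = y ᵥ* CL := by
        rw [Matrix.vecMul_neg, add_neg_eq_zero] at h1
        exact h1
      have := congrArg (fun v => v ᵥ* AL⁻¹) h1'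
      simpa [Matrix.vecMul_vecMul, Matrix.mul_nonsing_inv AL hdet, Matrix.vecMul_one]
        using this
    refine ⟨y, ?_, ?_⟩
    · simp only [Set.mem_setOf_eq]
      have hxB : y ᵥ* (CL * AL⁻¹ * BL) = x ᵥ* BL := by
        rw [hx, Matrix.vecMul_vecMul]
      rw [hPL, Matrix.vecMul_add, hxB, add_comm]
      exact h2
    · simp only [Set.mem_setOf_eq]
      rw [hwelim, hx]
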